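/- For independent complex random variables X with E|X|^k ≤ 1/(N q^{k−2}) for all 2 ≤ k ≤ 2r (r a positive integer, q ≥ 1, N ≥ 1), we have E(|X|² − E|X|²)^r ≤ (1/(N q^{2r−2})) · (1 + 2q²/N)^r. -/

import Mathlib

open MeasureTheory Finset

set_option maxHeartbeats 1000000 in
/-- For a complex random variable `X` with `E|X|^k ≤ 1/(N q^{k−2})` for all `2 ≤ k ≤ 2r`
(`r ≥ 1`, `q ≥ 1`, `N ≥ 1`), one has
`E(|X|² − E|X|²)^r ≤ (1/(N q^{2r−2})) (1 + 2q²/N)^r`. -/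
theorem stmt_13 {Ω : Type*} [MeasurableSpace Ω] (μ : Measure Ω) [IsProbabilityMeasure μ]
    (r : ℕ) (hr : 1 ≤ r) (q N : ℝ) (hq : 1 ≤ q) (hN : 1 ≤ N)
    (X : Ω → ℂ) (hmeas : Measurable X)
    (hintk : ∀ k, 2 ≤ k → k ≤ 2 * r → Integrable (fun ω => ‖X ω‖ ^ k) μ)
    (hmom : ∀ k, 2 ≤ k → k ≤ 2 * r →
      ∫ ω, ‖X ω‖ ^ k ∂μ ≤ 1 / (N * q ^ (k - 2))) :
    ∫ ω, (‖X ω‖ ^ 2 - ∫ ω', ‖X ω'‖ ^ 2 ∂μ) ^ r ∂μ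
      ≤ 1 / (N * q ^ (2 * r - 2)) * (1 + 2 * q ^ 2 / N) ^ r := by
  have hN0 : (0:ℝ) < N := lt_of_lt_of_le one_pos hN
  have hq0 : (0:ℝ) < q := lt_of_lt_of_le one_pos hq
  set f : Ω → ℝ := fun ω => ‖X ω‖ with hf
  set m : ℝ := ∫ ω', f ω' ^ 2 ∂μ with hm
  have hf0 : ∀ ω, 0 ≤ f ω := fun ω => norm_nonneg _
  have hm0 : 0 ≤ m := integral_nonneg fun ω => by positivity
  have hmN : m ≤ 1 / N := by
    have := hmom 2 le_rfl (by omega)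
    simpa using this
  -- integrability of f^(2j)
  have hint : ∀ j ≤ r, Integrable (fun ω => f ω ^ (2*j)) μ := by
    intro j hj
    rcases Nat.eq_zero_or_pos j with h0 | h1
    · subst h0; simpa using (integrable_const (1:ℝ))
    · exact hintk (2*j) (by omega) (by omega)
  -- moment bounds
  have hmomj : ∀ j, 1 ≤ j → j ≤ r → ∫ ω, f ω ^ (2*j) ∂μ ≤ 1 / (N * q ^ (2*j - 2)) :=
    fun j h1 h2 => hmom (2*j) (by omega) (by omega)
  have hmomj0 : ∀ j, 0 ≤ ∫ ω, f ω ^ (2*j) ∂μ :=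
    fun j => integral_nonneg fun ω => by positivity
  -- expand the integrand
  have hexp : ∀ ω, (f ω ^ 2 - m) ^ r
      = ∑ j ∈ range (r+1), f ω ^ (2*j) * (-m) ^ (r - j) * (r.choose j : ℝ) := by
    intro ω
    rw [sub_eq_add_neg, add_pow]
    exact Finset.sum_congr rfl fun j hj => by rw [← pow_mul]
  have hintsum : ∀ j ∈ range (r+1),
      Integrable (fun ω => f ω ^ (2*j) * (-m) ^ (r - j) * (r.choose j : ℝ)) μ := by
    intro j hj
    exact ((hint j (by simpa using Nat.lt_succ_iff.mp (mem_range.mp hj))).mul_const _).mul_const _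
  have hIeq : ∫ ω, (f ω ^ 2 - m) ^ r ∂μ
      = ∑ j ∈ range (r+1), (∫ ω, f ω ^ (2*j) ∂μ) * (-m) ^ (r - j) * (r.choose j : ℝ) := by
    rw [show (fun ω => (f ω ^ 2 - m) ^ r) = fun ω =>
        ∑ j ∈ range (r+1), f ω ^ (2*j) * (-m) ^ (r - j) * (r.choose j : ℝ) from funext hexp,
      integral_finset_sum _ hintsum]
    exact Finset.sum_congr rfl fun j hj => by rw [integral_mul_const, integral_mul_const]
  -- expand the RHS
  set c : ℝ := 1 / (N * q ^ (2 * r - 2)) with hc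
  set b : ℝ := 2 * q ^ 2 / N with hb
  have hc0 : 0 < c := by positivity
  have hb0 : 0 < b := by positivity
  have hRHS : c * (1 + b) ^ r = ∑ j ∈ range (r+1), c * b ^ (r - j) * (r.choose j : ℝ) := by
    rw [add_pow]
    rw [Finset.mul_sum]
    exact Finset.sum_congr rfl fun j hj => by ring
  rw [hIeq, hRHS]
  -- split both sums at j = 2
  have hsplit : ∀ g : ℕ → ℝ, ∑ j ∈ range (r+1), g j = g 0 + g 1 + ∑ j ∈ Ico 2 (r+1), g j := by
    intro g
    rw [range_eq_Ico, ← Finset.sum_Ico_consecutive g (Nat.zero_le 2) (by omega)]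
    norm_num [Finset.sum_range_succ]
  rw [hsplit, hsplit]
  set A : ℕ → ℝ := fun j => ∫ ω, f ω ^ (2*j) ∂μ with hA
  obtain ⟨s, hs⟩ : ∃ s, r = s + 1 := ⟨r - 1, by omega⟩
  have hA0 : A 0 = 1 := by
    have : A 0 = ∫ ω, f ω ^ (2*0) ∂μ := rfl
    rw [this]; simp
  have hA1 : A 1 = m := by
    have : A 1 = ∫ ω, f ω ^ (2*1) ∂μ := rfl
    rw [this, hm]
  clear_value f m c b A
  have hmpow : ∀ i : ℕ, m ^ i ≤ (1/N) ^ i := fun i => pow_le_pow_left₀ hm0 hmN i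
  -- head terms
  have hhead : A 0 * (-m) ^ (r - 0) * (r.choose 0 : ℝ)
      + A 1 * (-m) ^ (r - 1) * (r.choose 1 : ℝ)
      ≤ c * b ^ (r - 0) * (r.choose 0 : ℝ) + c * b ^ (r - 1) * (r.choose 1 : ℝ) := by
    have hneg : -(m ^ r) ≤ (-m) ^ r := by
      have : |(-m) ^ r| = m ^ r := by rw [abs_pow, abs_neg, abs_of_nonneg hm0]
      linarith [neg_abs_le ((-m) ^ r), this.le]
    have hcomb : A 0 * (-m) ^ (r - 0) * (r.choose 0 : ℝ)
        + A 1 * (-m) ^ (r - 1) * (r.choose 1 : ℝ) = (1 - (r:ℝ)) * (-m) ^ r := by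
      rw [hA0, hA1, Nat.choose_zero_right, Nat.choose_one_right, Nat.sub_zero]
      have : m * (-m) ^ (r - 1) = -((-m) ^ r) := by
        rw [hs, Nat.add_sub_cancel, pow_succ]; ring
      rw [this]; push_cast; ring
    rw [hcomb]
    have h1r : (1 - (r:ℝ)) ≤ 0 := by
      have : (1:ℝ) ≤ (r:ℝ) := by exact_mod_cast hr
      linarith
    have step1 : (1 - (r:ℝ)) * (-m) ^ r ≤ ((r:ℝ) - 1) * m ^ r := by
      nlinarith [mul_le_mul_of_nonpos_left hneg h1r]
    have step2 : ((r:ℝ) - 1) * m ^ r ≤ (r:ℝ) * (1/N) ^ r := by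
      have h1 := hmpow r
      have h2 : (0:ℝ) ≤ m ^ r := pow_nonneg hm0 r
      have h3 : (0:ℝ) ≤ (r:ℝ) := Nat.cast_nonneg r
      nlinarith
    have hq2 : q ^ (2*r - 2) = (q^2) ^ (r-1) := by
      rw [← pow_mul]; congr 1; omega
    have step3 : (r:ℝ) * (1/N) ^ r ≤ c * b ^ (r - 1) * (r.choose 1 : ℝ) := by
      rw [Nat.choose_one_right, hc, hb, hq2]
      have heq : 1 / (N * (q^2) ^ (r-1)) * (2 * q^2 / N) ^ (r-1)
          = 2 ^ (r-1) * (1/N) ^ r := by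
        rw [hs, Nat.add_sub_cancel, div_pow, mul_pow, pow_succ]
        field_simp
        rw [← pow_succ', ← mul_pow, mul_one_div_cancel hN0.ne', one_pow]
      rw [heq]
      have h2p : (1:ℝ) ≤ 2 ^ (r-1) := one_le_pow₀ (by norm_num : (1:ℝ) ≤ 2)
      have h4 : (0:ℝ) ≤ (1/N) ^ r := by positivity
      have h5 : (0:ℝ) ≤ (r:ℝ) := Nat.cast_nonneg r
      nlinarith [mul_nonneg (mul_nonneg (sub_nonneg.mpr h2p) h4) h5]
    have hT0 : 0 ≤ c * b ^ (r - 0) * (r.choose 0 : ℝ) := by positivity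
    linarith
  -- tail terms
  have htail : ∑ j ∈ Ico 2 (r+1), A j * (-m) ^ (r - j) * (r.choose j : ℝ)
      ≤ ∑ j ∈ Ico 2 (r+1), c * b ^ (r - j) * (r.choose j : ℝ) := by
    refine Finset.sum_le_sum fun j hj => ?_
    obtain ⟨hj2, hjr⟩ := Finset.mem_Ico.mp hj
    have hjr' : j ≤ r := by omega
    have hC : (0:ℝ) ≤ (r.choose j : ℝ) := Nat.cast_nonneg _
    have hAj0 : 0 ≤ A j := by rw [hA]; exact hmomj0 j
    have hAjle : A j ≤ 1 / (N * q ^ (2*j - 2)) := by rw [hA]; exact hmomj j (by omega) hjr'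
    have hnegpow : (-m) ^ (r - j) ≤ m ^ (r - j) := by
      have : |(-m) ^ (r-j)| = m ^ (r-j) := by rw [abs_pow, abs_neg, abs_of_nonneg hm0]
      linarith [le_abs_self ((-m) ^ (r-j))]
    have hscalar : 1 / (N * q ^ (2*j - 2)) * (1/N) ^ (r - j) ≤ c * b ^ (r - j) := by
      rw [hc, hb]
      have hqsplit : q ^ (2*r - 2) = q ^ (2*j - 2) * (q^2) ^ (r - j) := by
        rw [← pow_mul, ← pow_add]; congr 1; omega
      rw [hqsplit]
      have heq : 1 / (N * (q ^ (2*j-2) * (q^2) ^ (r-j))) * (2 * q^2 / N) ^ (r-j)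
          = 2 ^ (r-j) * (1 / (N * q ^ (2*j-2)) * (1/N) ^ (r-j)) := by
        rw [div_pow, mul_pow]
        field_simp
        rw [← mul_pow, mul_one_div_cancel hN0.ne', one_pow]
      rw [heq]
      have h2p : (1:ℝ) ≤ 2 ^ (r-j) := one_le_pow₀ (by norm_num : (1:ℝ) ≤ 2)
      have hpos : (0:ℝ) ≤ 1 / (N * q ^ (2*j-2)) * (1/N) ^ (r-j) := by positivity
      nlinarith [mul_nonneg (sub_nonneg.mpr h2p) hpos]
    calc A j * (-m) ^ (r - j) * (r.choose j : ℝ)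
        ≤ A j * m ^ (r - j) * (r.choose j : ℝ) := by
          apply mul_le_mul_of_nonneg_right _ hC
          exact mul_le_mul_of_nonneg_left hnegpow hAj0
      _ ≤ (1 / (N * q ^ (2*j - 2)) * (1/N) ^ (r - j)) * (r.choose j : ℝ) := by
          apply mul_le_mul_of_nonneg_right _ hC
          exact mul_le_mul hAjle (hmpow _) (pow_nonneg hm0 _) (by positivity)
      _ ≤ (c * b ^ (r - j)) * (r.choose j : ℝ) := mul_le_mul_of_nonneg_right hscalar hC
  have es : ∀ j, (∫ ω, f ω ^ (2*j) ∂μ) = A j := fun j => by rw [hA]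
  simp only [es]
  linarith
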